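/- Let f be a nonconstant polynomial with complex coefficients and ψ : ℂ → ℂ an entire function. Then the trace function z ↦ Σ_w ψ(w), where the sum runs over the roots w of the polynomial f − z counted with multiplicity (the multiset (f − C z).roots in Lean), is an entire function of z (complex differentiable on all of ℂ). -/

import Mathlib

open Polynomial Metric Set Filter MeasureTheory
open scoped Real Topology Interval

private lemma eval_derivative_multiset (s : Multiset ℂ) (w : ℂ) (hw : ∀ r ∈ s, w ≠ r) :
    eval w (derivative ((s.map fun r => X - C r).prod)) =
      eval w ((s.map fun r => X - C r).prod) * ((s.map fun r => (w - r)⁻¹).sum) := by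
  induction s using Multiset.induction_on with
  | empty => simp
  | cons a t ih =>
    have ha : w - a ≠ 0 := sub_ne_zero.2 (hw a (Multiset.mem_cons_self a t))
    have ih' := ih fun r hr => hw r (Multiset.mem_cons_of_mem hr)
    simp only [Multiset.map_cons, Multiset.prod_cons, Multiset.sum_cons,
      derivative_mul, derivative_sub, derivative_X, derivative_C, sub_zero, one_mul,
      eval_add, eval_mul, eval_sub, eval_X, eval_C, ih']
    field_simp

private lemma logderiv_eq (f : Polynomial ℂ) (hf : 1 ≤ f.degree) (z w : ℂ)
    (hw : f.eval w ≠ z) :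
    (derivative f).eval w * (f.eval w - z)⁻¹ =
      (((f - C z).roots).map fun r => (w - r)⁻¹).sum := by
  have hdeg : 0 < f.degree := lt_of_lt_of_le zero_lt_one hf
  set p := f - C z with hp
  have hpd : p.degree = f.degree := degree_sub_C hdeg
  have hp0 : p ≠ 0 := by
    intro h; rw [h, degree_zero] at hpd; rw [← hpd] at hdeg; exact absurd hdeg (by simp)
  have hsplit := (IsAlgClosed.splits p).eq_prod_roots
  have hwr : ∀ r ∈ p.roots, w ≠ r := by
    intro r hr hwr
    have : p.eval r = 0 := (isRoot_of_mem_roots hr)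
    rw [hp] at this
    simp only [eval_sub, eval_C, sub_eq_zero] at this
    exact hw (hwr ▸ this)
  have hpe : eval w p = f.eval w - z := by simp [hp]
  have hpen : eval w p ≠ 0 := by rw [hpe]; exact sub_ne_zero.2 hw
  have hdp : derivative p = derivative f := by simp [hp]
  have hev : eval w p = p.leadingCoeff * eval w ((p.roots.map fun r => X - C r).prod) := by
    conv_lhs => rw [hsplit]
    rw [eval_mul, eval_C]
  have hevd : eval w (derivative p) =
      p.leadingCoeff * eval w (derivative ((p.roots.map fun r => X - C r).prod)) := by
    conv_lhs => rw [hsplit]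
    rw [derivative_C_mul, eval_mul, eval_C]
  have key : eval w (derivative p) = eval w p * ((p.roots.map fun r => (w - r)⁻¹).sum) := by
    rw [hevd, eval_derivative_multiset p.roots w hwr, hev]
    ring
  rw [← hdp, ← hpe, key, mul_comm (eval w p), mul_inv_cancel_right₀ hpen]

private lemma circleIntegrable_msum (R : ℝ) (g : ℂ → ℂ → ℂ) (s : Multiset ℂ)
    (hg : ∀ r ∈ s, CircleIntegrable (g r) 0 R) :
    CircleIntegrable (fun w => (s.map fun r => g r w).sum) 0 R := by
  induction s using Multiset.induction_on with
  | empty => simp only [Multiset.map_zero, Multiset.sum_zero]; exact circleIntegrable_const (0 : ℂ) 0 R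
  | cons a t ih =>
    simp only [Multiset.map_cons, Multiset.sum_cons]
    exact (hg a (Multiset.mem_cons_self a t)).add
      (ih fun r hr => hg r (Multiset.mem_cons_of_mem hr))

private lemma circleIntegral_msum (R : ℝ) (g : ℂ → ℂ → ℂ) (s : Multiset ℂ)
    (hg : ∀ r ∈ s, CircleIntegrable (g r) 0 R) :
    (∮ w in C(0, R), (s.map fun r => g r w).sum) =
      (s.map fun r => ∮ w in C(0, R), g r w).sum := by
  induction s using Multiset.induction_on with
  | empty => simp [circleIntegral]
  | cons a t ih =>
    simp only [Multiset.map_cons, Multiset.sum_cons]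
    rw [← ih fun r hr => hg r (Multiset.mem_cons_of_mem hr)]
    have h1 := (hg a (Multiset.mem_cons_self a t)).out
    have h2 := (circleIntegrable_msum R g t fun r hr => hg r (Multiset.mem_cons_of_mem hr)).out
    simp only [circleIntegral, smul_add]
    exact intervalIntegral.integral_add h1 h2

theorem trace_entire
    (f : Polynomial ℂ) (hf : 1 ≤ f.degree)
    (ψ : ℂ → ℂ) (hψ : Differentiable ℂ ψ) :
    Differentiable ℂ (fun z : ℂ => (((f - C z).roots).map ψ).sum) := by
  intro z₀
  set M : ℝ := ‖z₀‖ + 1 with hM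
  have hdeg : 0 < f.degree := lt_of_lt_of_le zero_lt_one hf
  obtain ⟨R, hR1, hR⟩ : ∃ R : ℝ, 1 ≤ R ∧ ∀ w : ℂ, R ≤ ‖w‖ → M < ‖f.eval w‖ := by
    have ht : Tendsto (fun w : ℂ => ‖f.eval w‖) (comap norm atTop) atTop :=
      f.tendsto_norm_atTop hdeg tendsto_comap
    have h := ht.eventually_gt_atTop M
    rw [Filter.eventually_comap] at h
    obtain ⟨R₀, hR₀⟩ := Filter.eventually_atTop.mp h
    exact ⟨max R₀ 1, le_max_right _ _,
      fun w hw => hR₀ ‖w‖ (le_trans (le_max_left _ _) hw) w rfl⟩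
  have hRpos : (0 : ℝ) < R := lt_of_lt_of_le zero_lt_one hR1
  have hroots : ∀ z : ℂ, ‖z‖ < M → ∀ r ∈ (f - C z).roots, ‖r‖ < R := by
    intro z hz r hr
    by_contra h
    push_neg at h
    have he : f.eval r = z := by
      have := isRoot_of_mem_roots hr
      simpa [IsRoot, sub_eq_zero] using this
    have := hR r h
    rw [he] at this
    linarith
  have hsphere : ∀ z : ℂ, ‖z‖ < M → ∀ w ∈ sphere (0 : ℂ) R, f.eval w ≠ z := by
    intro z hz w hw heq
    have hwn : ‖w‖ = R := by simpa using hw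
    have := hR w hwn.ge
    rw [heq] at this
    linarith
  set G : ℂ → ℂ := fun z => (2 * (Real.pi : ℂ) * Complex.I)⁻¹ *
    ∮ w in C(0, R), (derivative f).eval w * ψ w * (f.eval w - z)⁻¹ with hGdef
  -- Step A : agreement with the trace on the ball of radius M
  have hFG : ∀ z : ℂ, ‖z‖ < M → (((f - C z).roots).map ψ).sum = G z := by
    intro z hz
    have hint : ∀ r ∈ (f - C z).roots, CircleIntegrable (fun w => (w - r)⁻¹ * ψ w) 0 R := by
      intro r hr
      refine ContinuousOn.circleIntegrable hRpos.le ?_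
      intro w hw
      have hwr : w - r ≠ 0 := by
        have hwn : ‖w‖ = R := by simpa using hw
        have := hroots z hz r hr
        intro h
        rw [sub_eq_zero] at h
        rw [h] at hwn
        linarith
      exact (((continuousAt_id.sub continuousAt_const).inv₀ hwr).mul
        hψ.continuous.continuousAt).continuousWithinAt
    have hcong : (∮ w in C(0, R), (derivative f).eval w * ψ w * (f.eval w - z)⁻¹)
        = ∮ w in C(0, R), ((f - C z).roots.map fun r => (w - r)⁻¹ * ψ w).sum := by
      refine circleIntegral.integral_congr hRpos.le fun w hw => ?_
      have h1 := logderiv_eq f hf z w (hsphere z hz w hw)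
      have h2 : (((f - C z).roots).map fun r => (w - r)⁻¹ * ψ w).sum
          = (((f - C z).roots).map fun r => (w - r)⁻¹).sum * ψ w :=
        Multiset.sum_map_mul_right
      rw [h2, ← h1]
      ring
    have hcauchy : ∀ r ∈ (f - C z).roots,
        (∮ w in C(0, R), (w - r)⁻¹ * ψ w) = (2 * (Real.pi : ℂ) * Complex.I) * ψ r := by
      intro r hr
      have hr' : r ∈ ball (0 : ℂ) R := by
        simpa [mem_ball_zero_iff] using hroots z hz r hr
      have := (hψ.differentiableOn (s := closedBall (0:ℂ) R)).circleIntegral_sub_inv_smul hr'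
      simpa [smul_eq_mul] using this
    rw [hGdef]
    simp only
    rw [hcong, circleIntegral_msum R (fun r w => (w - r)⁻¹ * ψ w) _ hint,
      Multiset.map_congr rfl hcauchy,
      show (((f - C z).roots).map fun r => (2 * (Real.pi : ℂ) * Complex.I) * ψ r).sum
        = (2 * (Real.pi : ℂ) * Complex.I) * (((f - C z).roots).map ψ).sum from
        Multiset.sum_map_mul_left,
      inv_mul_cancel_left₀ Complex.two_pi_I_ne_zero]
  -- Step B : differentiability of G at z₀
  have hG : DifferentiableAt ℂ G z₀ := by
    set cm : ℝ → ℂ := circleMap 0 R with hcm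
    set F : ℂ → ℝ → ℂ := fun z θ => (cm θ * Complex.I) *
      ((derivative f).eval (cm θ) * ψ (cm θ) * (f.eval (cm θ) - z)⁻¹) with hF
    set F' : ℂ → ℝ → ℂ := fun z θ => (cm θ * Complex.I) *
      ((derivative f).eval (cm θ) * ψ (cm θ) * ((f.eval (cm θ) - z) ^ 2)⁻¹) with hF'
    have hcmc : Continuous cm := continuous_circleMap 0 R
    have hcms : ∀ θ : ℝ, cm θ ∈ sphere (0 : ℂ) R := fun θ => circleMap_mem_sphere _ hRpos.le θ
    have hden : ∀ θ : ℝ, ∀ z ∈ ball z₀ (1/2 : ℝ), (1/2 : ℝ) ≤ ‖f.eval (cm θ) - z‖ := by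
      intro θ z hz
      have h1 : M < ‖f.eval (cm θ)‖ := by
        have hwn : ‖cm θ‖ = R := by simpa using hcms θ
        exact hR _ hwn.ge
      have h2 : ‖z‖ ≤ ‖z₀‖ + 1/2 := by
        have := mem_ball_iff_norm.mp hz
        calc ‖z‖ = ‖z₀ + (z - z₀)‖ := by ring_nf
          _ ≤ ‖z₀‖ + ‖z - z₀‖ := norm_add_le _ _
          _ ≤ ‖z₀‖ + 1/2 := by linarith
      calc (1/2 : ℝ) = M - (‖z₀‖ + 1/2) := by rw [hM]; ring
        _ ≤ ‖f.eval (cm θ)‖ - ‖z‖ := by linarith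
        _ ≤ ‖f.eval (cm θ) - z‖ := by
            have := norm_sub_norm_le (f.eval (cm θ)) z
            linarith
    have hdenne : ∀ θ : ℝ, ∀ z ∈ ball z₀ (1/2 : ℝ), f.eval (cm θ) - z ≠ 0 := by
      intro θ z hz h
      have := hden θ z hz
      rw [h, norm_zero] at this
      linarith
    have hcont : ∀ z ∈ ball z₀ (1/2 : ℝ), Continuous (F z) := by
      intro z hz
      refine (hcmc.mul continuous_const).mul
        ((((derivative f).continuous.comp hcmc).mul (hψ.continuous.comp hcmc)).mul ?_)
      exact ((f.continuous.comp hcmc).sub continuous_const).inv₀ fun θ => hdenne θ z hz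
    have hz₀ball : z₀ ∈ ball z₀ (1/2 : ℝ) := mem_ball_self (by norm_num)
    have hF'cont : Continuous (F' z₀) := by
      refine (hcmc.mul continuous_const).mul
        ((((derivative f).continuous.comp hcmc).mul (hψ.continuous.comp hcmc)).mul ?_)
      exact (((f.continuous.comp hcmc).sub continuous_const).pow 2).inv₀
        fun θ => pow_ne_zero 2 (hdenne θ z₀ hz₀ball)
    set bound : ℝ → ℝ := fun θ =>
      ‖cm θ * Complex.I‖ * (‖(derivative f).eval (cm θ) * ψ (cm θ)‖ * 4) with hbounddef
    have hbnd : ∀ᵐ θ ∂(volume : Measure ℝ), θ ∈ Ι (0:ℝ) (2 * Real.pi) →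
        ∀ z ∈ ball z₀ (1/2 : ℝ), ‖F' z θ‖ ≤ bound θ := by
      refine Filter.Eventually.of_forall fun θ _ z hz => ?_
      rw [hF']
      simp only [norm_mul]
      rw [hbounddef]
      simp only [norm_mul]
      gcongr
      have h2 : (1/2 : ℝ) ≤ ‖f.eval (cm θ) - z‖ := hden θ z hz
      rw [norm_inv, norm_pow]
      have hp : (1/4 : ℝ) ≤ ‖f.eval (cm θ) - z‖ ^ 2 := by nlinarith
      rw [inv_le_comm₀ (by linarith) (by norm_num)]
      linarith
    have hdiff : ∀ᵐ θ ∂(volume : Measure ℝ), θ ∈ Ι (0:ℝ) (2 * Real.pi) →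
        ∀ z ∈ ball z₀ (1/2 : ℝ), HasDerivAt (fun z => F z θ) (F' z θ) z := by
      refine Filter.Eventually.of_forall fun θ _ z hz => ?_
      have hb := hdenne θ z hz
      have h1 : HasDerivAt (fun z : ℂ => f.eval (cm θ) - z) (-1) z := by
        simpa using (hasDerivAt_id z).const_sub (f.eval (cm θ))
      have h2 : HasDerivAt (fun z : ℂ => (f.eval (cm θ) - z)⁻¹)
          (((f.eval (cm θ) - z) ^ 2)⁻¹) z := by
        have := h1.inv hb
        simpa [div_eq_mul_inv, Pi.inv_def] using this
      have h3 := (h2.const_mul ((derivative f).eval (cm θ) * ψ (cm θ))).const_mul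
        (cm θ * Complex.I)
      simpa [hF, hF', mul_assoc] using h3
    have hmeas : ∀ᶠ z in 𝓝 z₀, AEStronglyMeasurable (F z)
        ((volume : Measure ℝ).restrict (Ι (0:ℝ) (2 * Real.pi))) :=
      Filter.eventually_of_mem (ball_mem_nhds z₀ (by norm_num))
        fun z hz => ((hcont z hz).aestronglyMeasurable).restrict
    have hFint : IntervalIntegrable (F z₀) volume 0 (2 * Real.pi) :=
      (hcont z₀ hz₀ball).intervalIntegrable 0 (2 * Real.pi)
    have hF'meas : AEStronglyMeasurable (F' z₀)
        ((volume : Measure ℝ).restrict (Ι (0:ℝ) (2 * Real.pi))) :=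
      hF'cont.aestronglyMeasurable.restrict
    have hbint : IntervalIntegrable bound volume 0 (2 * Real.pi) :=
      (hcmc.mul continuous_const).norm.mul
        ((((derivative f).continuous.comp hcmc).mul
          (hψ.continuous.comp hcmc)).norm.mul continuous_const)
        |>.intervalIntegrable 0 (2 * Real.pi)
    have hkey := intervalIntegral.hasDerivAt_integral_of_dominated_loc_of_deriv_le
      (F := F) (F' := F') (x₀ := z₀) (a := 0) (b := 2 * Real.pi) (μ := volume)
      (bound := bound) (s := ball z₀ (1/2)) (ball_mem_nhds z₀ (by norm_num)) hmeas hFint hF'meas hbnd hbint hdiff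
    have hDint : DifferentiableAt ℂ
        (fun z => ∫ θ in (0:ℝ)..(2 * Real.pi), F z θ) z₀ := hkey.2.differentiableAt
    have hGeq : G = fun z => (2 * (Real.pi : ℂ) * Complex.I)⁻¹ *
        ∫ θ in (0:ℝ)..(2 * Real.pi), F z θ := by
      funext z
      rw [hGdef]
      simp only [circleIntegral, deriv_circleMap, smul_eq_mul, hF, hcm]
    rw [hGeq]
    exact hDint.const_mul _
  -- Step C : conclude
  have hev : (fun z : ℂ => (((f - C z).roots).map ψ).sum) =ᶠ[𝓝 z₀] G := by
    refine Filter.eventually_of_mem (isOpen_ball.mem_nhds (x := z₀)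
      (mem_ball_zero_iff.mpr (by rw [hM]; linarith)) : ball (0:ℂ) M ∈ 𝓝 z₀) ?_
    exact fun z hz => hFG z (mem_ball_zero_iff.mp hz)
  exact hG.congr_of_eventuallyEq hev
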